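/- Let G be a finite p-group with exactly one conjugacy class of minimal non-abelian subgroups. Then G itself is minimal non-abelian. -/

import Mathlib

open Pointwise

/-- A subgroup is minimal non-abelian if it is non-abelian and all its proper
subgroups are abelian. -/
def IsMinNonab (G : Type*) [Group G] (H : Subgroup G) : Prop :=
  ¬ IsMulCommutative H ∧ ∀ K : Subgroup G, K < H → IsMulCommutative K

/-- `kappa1 G` : the number of conjugacy classes of minimal non-abelian subgroups of `G`. -/
noncomputable def kappa1 (G : Type*) [Group G] : ℕ :=
  Set.ncard {O : Set (Subgroup G) |
    ∃ H : Subgroup G, IsMinNonab G H ∧ O = MulAction.orbit (ConjAct G) H}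

namespace MNA

variable {G : Type*} [Group G]

open scoped commutatorElement

lemma isComm_iff (H : Subgroup G) :
    IsMulCommutative H ↔ ∀ a ∈ H, ∀ b ∈ H, a * b = b * a := by
  constructor
  · intro h a ha b hb
    exact Subgroup.mul_comm_of_mem_isMulCommutative (H := H) ha hb
  · intro h
    exact ⟨⟨fun a b => Subtype.ext (h a a.2 b b.2)⟩⟩

lemma comm_of_le {H K : Subgroup G} (h : H ≤ K) (hK : IsMulCommutative K) :
    IsMulCommutative H := by
  rw [isComm_iff] at *
  exact fun a ha b hb => hK a (h ha) b (h hb)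

lemma not_comm_iff (H : Subgroup G) :
    ¬ IsMulCommutative H ↔ ∃ a ∈ H, ∃ b ∈ H, a * b ≠ b * a := by
  rw [isComm_iff]; push_neg; rfl

/-- conjugation preserves commutativity -/
lemma smul_comm_iff (g : ConjAct G) (H : Subgroup G) :
    IsMulCommutative (g • H : Subgroup G) ↔ IsMulCommutative H := by
  constructor
  · intro h
    rw [isComm_iff] at h ⊢
    intro a ha b hb
    have ha' : g • a ∈ g • H := Subgroup.smul_mem_pointwise_smul a g H ha
    have hb' : g • b ∈ g • H := Subgroup.smul_mem_pointwise_smul b g H hb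
    have := h _ ha' _ hb'
    rw [← smul_mul', ← smul_mul'] at this
    exact smul_left_cancel g this
  · intro h
    rw [isComm_iff] at h ⊢
    rintro a ha b hb
    rw [Subgroup.mem_smul_pointwise_iff_exists] at ha hb
    obtain ⟨s, hs, rfl⟩ := ha
    obtain ⟨t, ht, rfl⟩ := hb
    rw [← smul_mul', ← smul_mul', h s hs t ht]

lemma isMinNonab_smul {H : Subgroup G} (g : ConjAct G) (h : IsMinNonab G H) :
    IsMinNonab G (g • H) := by
  constructor
  · rw [smul_comm_iff]; exact h.1
  · intro L hL
    have h1 : g⁻¹ • L < H := by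
      have h2 : g⁻¹ • L < g⁻¹ • (g • H) := by
        rw [lt_iff_le_and_ne] at hL ⊢
        exact ⟨Subgroup.pointwise_smul_le_pointwise_smul_iff.mpr hL.1,
          fun hh => hL.2 (by simpa using smul_left_cancel g⁻¹ hh)⟩
      rwa [inv_smul_smul] at h2
    have := (smul_comm_iff g⁻¹ L).mp (h.2 _ h1)
    exact this



lemma card_lt_of_lt [Finite G] {H K : Subgroup G} (h : H < K) :
    Nat.card H < Nat.card K := by
  refine lt_of_le_of_ne (Subgroup.card_le_of_le h.le) (fun hc => h.ne ?_)
  exact Subgroup.eq_of_le_of_card_ge h.le hc.ge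

lemma exists_maximal [Finite G] {H : Subgroup G} (hH : H ≠ ⊤) :
    ∃ M : Subgroup G, H ≤ M ∧ IsCoatom M := by
  classical
  set S : Set ℕ := (fun L : Subgroup G => Nat.card L) '' {L | H ≤ L ∧ L ≠ ⊤}
  have hSne : S.Nonempty := ⟨Nat.card H, ⟨H, ⟨le_rfl, hH⟩, rfl⟩⟩
  have hSbdd : BddAbove S := by
    refine ⟨Nat.card G, ?_⟩
    rintro n ⟨L, _, rfl⟩
    exact (Subgroup.card_le_of_le le_top).trans_eq Subgroup.card_top
  obtain ⟨M, hM, hMcard⟩ := Nat.sSup_mem hSne hSbdd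
  change Nat.card M = sSup S at hMcard
  refine ⟨M, hM.1, hM.2, fun L hL => ?_⟩
  by_contra hLt
  have : Nat.card L ∈ S := ⟨L, ⟨hM.1.trans hL.le, hLt⟩, rfl⟩
  have h2 := le_csSup hSbdd this
  rw [← hMcard] at h2
  exact absurd (card_lt_of_lt hL) (not_lt.mpr h2)

variable {p : ℕ} [Fact p.Prime]

lemma normal_of_coatom [Finite G] (hG : IsPGroup p G) {M : Subgroup G} (hM : IsCoatom M) :
    M.Normal := by
  have h1 : Group.IsNilpotent G := hG.isNilpotent
  exact Subgroup.NormalizerCondition.normal_of_coatom M (normalizerCondition_of_isNilpotent) hM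

lemma quotient_subgroups {M : Subgroup G} (hM : IsCoatom M) [M.Normal]
    (N : Subgroup (G ⧸ M)) : N = ⊥ ∨ N = ⊤ := by
  set f := QuotientGroup.mk' M
  have hsurj : Function.Surjective f := QuotientGroup.mk'_surjective M
  have h1 : M ≤ N.comap f := by
    intro m hm
    have : f m = 1 := (QuotientGroup.eq_one_iff m).mpr hm
    rw [Subgroup.mem_comap, this]
    exact N.one_mem
  by_cases hc : N.comap f = ⊤
  · right
    have := Subgroup.map_comap_eq_self_of_surjective hsurj N
    rw [← this, hc]
    exact Subgroup.map_top_of_surjective f hsurj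
  · left
    have hMe : M = N.comap f := by
      by_contra hne
      exact hc (hM.2 _ (lt_of_le_of_ne h1 hne))
    have := Subgroup.map_comap_eq_self_of_surjective hsurj N
    rw [← this, ← hMe]
    rw [Subgroup.map_eq_bot_iff]
    rw [QuotientGroup.ker_mk']

lemma index_eq_p [Finite G] (hG : IsPGroup p G) {M : Subgroup G} (hM : IsCoatom M) :
    M.index = p := by
  have hp := (Fact.out : p.Prime)
  haveI : M.Normal := normal_of_coatom hG hM
  set Q := G ⧸ M
  have hQ : IsPGroup p Q := hG.to_quotient M
  obtain ⟨x, hx⟩ : ∃ x : G, x ∉ M := by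
    by_contra hc; push_neg at hc
    exact hM.1 ((Subgroup.eq_top_iff' M).mpr hc)
  have hq1 : (x : Q) ≠ 1 := fun hc => hx ((QuotientGroup.eq_one_iff x).mp hc)
  obtain ⟨k, hk⟩ := (IsPGroup.iff_orderOf.mp hQ) (x : Q)
  have hk1 : k ≠ 0 := by
    rintro rfl
    rw [pow_zero, orderOf_eq_one_iff] at hk
    exact hq1 hk
  set r : Q := (x : Q) ^ (p ^ (k - 1))
  have hordr : orderOf r = p := by
    rw [orderOf_pow, hk, Nat.gcd_eq_right (pow_dvd_pow p (Nat.sub_le k 1)),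
      Nat.pow_div (Nat.sub_le k 1) hp.pos]
    have : k - (k - 1) = 1 := by omega
    rw [this, pow_one]
  have hr1 : r ≠ 1 := by
    intro hc
    rw [hc, orderOf_one] at hordr
    exact hp.one_lt.ne' hordr.symm
  have hzt : Subgroup.zpowers r = ⊤ := by
    rcases quotient_subgroups hM (Subgroup.zpowers r) with h | h
    · exact absurd (Subgroup.zpowers_eq_bot.mp h) hr1
    · exact h
  have : Nat.card Q = p := by
    have h1 : Nat.card (Subgroup.zpowers r) = p := by rw [Nat.card_zpowers, hordr]
    rw [hzt, Subgroup.card_top] at h1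
    exact h1
  rw [Subgroup.index_eq_card]
  exact this



lemma exists_minNonab_le [Finite G] {H : Subgroup G} (hH : ¬ IsMulCommutative H) :
    ∃ B : Subgroup G, IsMinNonab G B ∧ B ≤ H := by
  set S : Set ℕ := (fun L : Subgroup G => Nat.card L) '' {L | ¬ IsMulCommutative L ∧ L ≤ H}
  have hSne : S.Nonempty := ⟨Nat.card H, ⟨H, ⟨hH, le_rfl⟩, rfl⟩⟩
  obtain ⟨B, hB, hBcard⟩ := Nat.sInf_mem hSne
  change Nat.card B = sInf S at hBcard
  refine ⟨B, ⟨hB.1, fun L hL => ?_⟩, hB.2⟩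
  by_contra hLc
  have hmem : Nat.card L ∈ S := ⟨L, ⟨hLc, hL.le.trans hB.2⟩, rfl⟩
  have := Nat.sInf_le hmem
  rw [← hBcard] at this
  exact absurd (card_lt_of_lt hL) (not_lt.mpr this)

lemma isMinNonab_map {M : Subgroup G} {K : Subgroup M} (hK : IsMinNonab M K) :
    IsMinNonab G (K.map M.subtype) := by
  constructor
  · intro hc
    apply hK.1
    rw [isComm_iff] at hc ⊢
    intro a ha b hb
    have h1 := hc _ (Subgroup.mem_map_of_mem M.subtype ha) _ (Subgroup.mem_map_of_mem M.subtype hb)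
    exact Subtype.ext h1
  · intro L hL
    have hLM : L ≤ M := hL.le.trans (Subgroup.map_subtype_le K)
    have h1 : (L.subgroupOf M).map M.subtype = L := by
      rw [Subgroup.subgroupOf_map_subtype]
      exact inf_eq_left.mpr hLM
    have h2 : L.subgroupOf M < K := by
      refine lt_of_le_of_ne ?_ (fun hc => hL.ne (by rw [← h1, hc]))
      have he : (K.map M.subtype).subgroupOf M = K := by
        unfold Subgroup.subgroupOf
        exact Subgroup.comap_map_eq_self_of_injective M.subtype_injective K
      rw [← he]
      unfold Subgroup.subgroupOf
      exact Subgroup.comap_mono hL.le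
    have h3 := hK.2 _ h2
    rw [isComm_iff] at h3 ⊢
    intro a ha b hb
    have haM : a ∈ M := hLM ha
    have hbM : b ∈ M := hLM hb
    have h4 := h3 ⟨a, haM⟩ (by rwa [Subgroup.mem_subgroupOf]) ⟨b, hbM⟩
      (by rwa [Subgroup.mem_subgroupOf])
    exact congrArg Subtype.val h4

lemma exists_not_mem_pair {H K : Subgroup G} (hH : H ≠ ⊤) (hK : K ≠ ⊤) :
    ∃ x : G, x ∉ H ∧ x ∉ K := by
  obtain ⟨a, ha⟩ : ∃ a : G, a ∉ H := by
    by_contra hc; push_neg at hc; exact hH ((Subgroup.eq_top_iff' H).mpr hc)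
  obtain ⟨b, hb⟩ : ∃ b : G, b ∉ K := by
    by_contra hc; push_neg at hc; exact hK ((Subgroup.eq_top_iff' K).mpr hc)
  by_cases haK : a ∈ K
  · by_cases hbH : b ∈ H
    · refine ⟨a * b, fun hc => ha ?_, fun hc => hb ?_⟩
      · have := H.mul_mem hc (H.inv_mem hbH); simpa using this
      · have := K.mul_mem (K.inv_mem haK) hc; simpa using this
    · exact ⟨b, hbH, hb⟩
  · exact ⟨a, ha, haK⟩



lemma center_facts [Finite G] (hG : IsPGroup p G) (hna : ¬ ∀ a b : G, a * b = b * a)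
    {M1 M2 : Subgroup G} (h1 : IsCoatom M1) (h2 : IsCoatom M2) (hne : M1 ≠ M2)
    (hc1 : IsMulCommutative M1) (hc2 : IsMulCommutative M2) :
    (∀ g : G, g ^ p ∈ Subgroup.center G) ∧ (∀ a b : G, ⁅a, b⁆ ∈ Subgroup.center G) := by
  have hp := (Fact.out : p.Prime)
  have hsup : M1 ⊔ M2 = ⊤ := by
    refine h1.2 _ (lt_of_le_of_ne le_sup_left fun hh => ?_)
    have hM2le : M2 ≤ M1 := hh ▸ le_sup_right
    rcases eq_or_lt_of_le hM2le with heq | hlt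
    · exact hne heq.symm
    · exact h1.1 (h2.2 _ hlt)
  have hcent : M1 ⊓ M2 ≤ Subgroup.center G := by
    intro z hz
    rw [Subgroup.mem_center_iff]
    intro g
    have hg : g ∈ Subgroup.centralizer {z} := by
      have hle : M1 ⊔ M2 ≤ Subgroup.centralizer {z} := by
        refine sup_le ?_ ?_
        · intro m hm
          rw [Subgroup.mem_centralizer_iff]
          rintro y rfl
          exact (isComm_iff M1).mp hc1 y hz.1 m hm
        · intro m hm
          rw [Subgroup.mem_centralizer_iff]
          rintro y rfl
          exact (isComm_iff M2).mp hc2 y hz.2 m hm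
      rw [hsup] at hle
      exact hle (Subgroup.mem_top g)
    rw [Subgroup.mem_centralizer_iff] at hg
    exact (hg z rfl).symm
  haveI hn2 : M2.Normal := normal_of_coatom hG h2
  have hidx : (Subgroup.center G).index ∣ p ^ 2 := by
    refine dvd_trans (Subgroup.index_dvd_of_le hcent) ?_
    have e1 : (M1 ⊓ M2).relIndex M1 * M1.index = (M1 ⊓ M2).index :=
      Subgroup.relIndex_mul_index inf_le_left
    rw [Subgroup.inf_relIndex_left] at e1
    rw [← e1, index_eq_p hG h1, pow_two]
    exact Nat.mul_dvd_mul (by simpa using (index_eq_p hG h2) ▸ M2.relIndex_dvd_index_of_normal M1)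
      dvd_rfl
  set Q := G ⧸ Subgroup.center G with hQdef
  have hcard : Nat.card Q ∣ p ^ 2 := by rw [← Subgroup.index_eq_card]; exact hidx
  have hcyc_comm : IsCyclic Q → ∀ a b : G, a * b = b * a := by
    intro hcyc a b
    exact commutative_of_cyclic_center_quotient (QuotientGroup.mk' _)
      (le_of_eq (QuotientGroup.ker_mk' _)) a b
  have hcard2 : Nat.card Q = p ^ 2 := by
    obtain ⟨k, hk2, hk⟩ := (Nat.dvd_prime_pow hp).mp hcard
    interval_cases k
    · exfalso
      haveI : Subsingleton Q := Nat.card_eq_one_iff_unique.mp (by simpa using hk) |>.1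
      exact hna (hcyc_comm inferInstance)
    · exfalso
      rw [pow_one] at hk
      haveI := Fact.mk hp
      exact hna (hcyc_comm (isCyclic_of_prime_card hk))
    · rw [hk]
  have hnotcyc : ¬ IsCyclic Q := fun hc => hna (hcyc_comm hc)
  have hexp : ∀ q : Q, q ^ p = 1 := by
    intro q
    have hord : orderOf q ∣ p ^ 2 := hcard2 ▸ orderOf_dvd_natCard q
    obtain ⟨k, hk2, hk⟩ := (Nat.dvd_prime_pow hp).mp hord
    interval_cases k
    · rw [pow_zero] at hk
      rw [orderOf_eq_one_iff.mp hk, one_pow]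
    · rw [pow_one] at hk
      rw [← hk, pow_orderOf_eq_one]
    · exfalso
      exact hnotcyc (isCyclic_of_orderOf_eq_card q (by rw [hk, hcard2]))
  constructor
  · intro g
    rw [← QuotientGroup.eq_one_iff]
    rw [QuotientGroup.mk_pow]
    exact hexp _
  · intro a b
    rw [← QuotientGroup.eq_one_iff]
    have hQcomm : ∀ x y : Q, x * y = y * x := IsPGroup.commutative_of_card_eq_prime_sq hcard2
    have : ((⁅a, b⁆ : G) : Q) = ⁅(a : Q), (b : Q)⁆ :=
      map_commutatorElement (QuotientGroup.mk' (Subgroup.center G)) a b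
    rw [this, commutatorElement_eq_one_iff_mul_comm]
    exact hQcomm _ _

lemma lemR [Finite G] (hG : IsPGroup p G)
    (hpow : ∀ g : G, g ^ p ∈ Subgroup.center G)
    (hcomm : ∀ a b : G, ⁅a, b⁆ ∈ Subgroup.center G)
    {x u : G} (hgen : Subgroup.closure {x, u} = ⊤)
    {M : Subgroup G} (hM : IsCoatom M) : IsMulCommutative M := by
  have hp := (Fact.out : p.Prime)
  haveI hMn : M.Normal := normal_of_coatom hG hM
  have hMidx : M.index = p := index_eq_p hG hM
  set Φ : Subgroup G :=
    Subgroup.closure ({g | ∃ h : G, h ^ p = g} ∪ {g | ∃ a b : G, ⁅a, b⁆ = g}) with hΦdef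
  have hΦZ : Φ ≤ Subgroup.center G := by
    rw [hΦdef, Subgroup.closure_le]
    rintro g (⟨h, rfl⟩ | ⟨a, b, rfl⟩)
    · exact hpow h
    · exact hcomm a b
  have hΦM : Φ ≤ M := by
    rw [hΦdef, Subgroup.closure_le]
    rintro g (⟨h, rfl⟩ | ⟨a, b, rfl⟩)
    · have := M.pow_index_mem h
      rwa [hMidx] at this
    · show ⁅a, b⁆ ∈ M
      have hcardQ : Nat.card (G ⧸ M) = p := by rw [← Subgroup.index_eq_card, hMidx]
      haveI : IsCyclic (G ⧸ M) := isCyclic_of_prime_card hcardQ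
      letI : CommGroup (G ⧸ M) := IsCyclic.commGroup
      rw [← QuotientGroup.eq_one_iff]
      have h2 : ((⁅a, b⁆ : G) : G ⧸ M) = ⁅(a : G ⧸ M), (b : G ⧸ M)⁆ :=
        map_commutatorElement (QuotientGroup.mk' M) a b
      rw [h2, commutatorElement_eq_one_iff_mul_comm]
      exact mul_comm _ _
  haveI hΦn : Φ.Normal := by
    constructor
    intro n hn g
    have hcent := Subgroup.mem_center_iff.mp (hΦZ hn)
    rw [hcent g, mul_assoc, mul_inv_cancel, mul_one]
    exact hn
  set f := QuotientGroup.mk' Φ with hfdef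
  have hsurj : Function.Surjective f := QuotientGroup.mk'_surjective Φ
  have hbar_comm : ∀ a b : G ⧸ Φ, a * b = b * a := by
    intro a b
    obtain ⟨a', rfl⟩ := hsurj a
    obtain ⟨b', rfl⟩ := hsurj b
    rw [← commutatorElement_eq_one_iff_mul_comm, ← map_commutatorElement f a' b']
    exact (QuotientGroup.eq_one_iff _).mpr
      (Subgroup.subset_closure (Or.inr ⟨a', b', rfl⟩))
  have hbar_exp : ∀ a : G ⧸ Φ, a ^ p = 1 := by
    intro a
    obtain ⟨a', rfl⟩ := hsurj a
    rw [← map_pow]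
    exact (QuotientGroup.eq_one_iff _).mpr
      (Subgroup.subset_closure (Or.inl ⟨a', rfl⟩))
  have inv_eq : ∀ a : G ⧸ Φ, a⁻¹ = a ^ (p - 1) := by
    intro a
    refine (inv_eq_of_mul_eq_one_right ?_)
    rw [← pow_succ']
    have : p - 1 + 1 = p := Nat.succ_pred_eq_of_pos hp.pos
    rw [this]
    exact hbar_exp a
  have hmod : ∀ (a : G ⧸ Φ) (i : ℕ), a ^ (i % p) = a ^ i := by
    intro a i
    conv_rhs => rw [← Nat.mod_add_div i p]
    rw [pow_add, pow_mul, hbar_exp, one_pow, mul_one]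
  have hdecomp : ∀ q : G ⧸ Φ, ∃ i j : ℕ, q = f x ^ i * f u ^ j := by
    intro q
    obtain ⟨g, rfl⟩ := hsurj q
    have hg : g ∈ Subgroup.closure {x, u} := by rw [hgen]; exact Subgroup.mem_top g
    induction hg using Subgroup.closure_induction with
    | mem y hy =>
      rcases hy with rfl | hy
      · exact ⟨1, 0, by simp⟩
      · rw [Set.mem_singleton_iff] at hy
        subst hy
        exact ⟨0, 1, by simp⟩
    | one => exact ⟨0, 0, by simp⟩
    | mul y z hy hz ihy ihz =>
      obtain ⟨i, j, hij⟩ := ihy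
      obtain ⟨i', j', hij'⟩ := ihz
      refine ⟨i + i', j + j', ?_⟩
      have hc : Commute (f u ^ j) (f x ^ i') := hbar_comm _ _
      rw [map_mul, hij, hij', pow_add, pow_add]
      rw [mul_assoc, ← mul_assoc (f u ^ j), hc.eq]
      group
    | inv y hy ihy =>
      obtain ⟨i, j, hij⟩ := ihy
      refine ⟨i * (p - 1), j * (p - 1), ?_⟩
      rw [map_inv, hij, mul_inv_rev, inv_eq, inv_eq, ← pow_mul, ← pow_mul]
      exact hbar_comm _ _
  have hcardbar : Nat.card (G ⧸ Φ) ≤ p ^ 2 := by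
    have hs2 : Function.Surjective
        (fun ij : Fin p × Fin p => f x ^ (ij.1 : ℕ) * f u ^ (ij.2 : ℕ)) := by
      intro q
      obtain ⟨i, j, hij⟩ := hdecomp q
      refine ⟨(⟨i % p, Nat.mod_lt _ hp.pos⟩, ⟨j % p, Nat.mod_lt _ hp.pos⟩), ?_⟩
      simp only []
      rw [hmod, hmod]
      exact hij.symm
    calc Nat.card (G ⧸ Φ) ≤ Nat.card (Fin p × Fin p) :=
          Nat.card_le_card_of_surjective _ hs2
      _ = p ^ 2 := by simp [Nat.card_eq_fintype_card, sq]
  set Mt : Subgroup (G ⧸ Φ) := M.map f with hMtdef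
  have hMt_idx : Mt.index = p := by
    rw [hMtdef, Subgroup.index_map_eq M hsurj
      (by rw [hfdef, QuotientGroup.ker_mk']; exact hΦM)]
    exact hMidx
  have hMt_card : Nat.card Mt ≤ p := by
    have h1 : Nat.card Mt * Mt.index = Nat.card (G ⧸ Φ) := Subgroup.card_mul_index Mt
    rw [hMt_idx] at h1
    have : Nat.card Mt * p ≤ p * p := by rw [h1]; simpa [sq] using hcardbar
    exact Nat.le_of_mul_le_mul_right this hp.pos
  have hMtP : IsPGroup p Mt := (hG.to_quotient Φ).to_subgroup Mt
  obtain ⟨n, hn⟩ := IsPGroup.iff_card.mp hMtP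
  have hn1 : n ≤ 1 := by
    by_contra hc
    push_neg at hc
    have : p ^ 2 ≤ p ^ n := Nat.pow_le_pow_right hp.pos hc
    have h2 : p ^ 2 ≤ p := le_trans this (hn ▸ hMt_card)
    have := hp.one_lt
    nlinarith [sq_nonneg p]
  -- key: every element of M is central * power of t
  have hzdec : ∃ t ∈ M, ∀ c ∈ M, ∃ z k, z ∈ Subgroup.center G ∧ c = z * t ^ (k : ℤ) := by
    interval_cases n
    · -- Mt trivial
      refine ⟨1, M.one_mem, fun c hc => ⟨c, 0, ?_, by simp⟩⟩
      have h1 : Mt = ⊥ := Subgroup.eq_bot_of_card_eq _ (by simpa using hn)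
      have h2 : f c ∈ Mt := Subgroup.mem_map_of_mem f hc
      rw [h1, Subgroup.mem_bot] at h2
      exact hΦZ ((QuotientGroup.eq_one_iff c).mp h2)
    · rw [pow_one] at hn
      haveI : IsCyclic Mt := isCyclic_of_prime_card hn
      obtain ⟨g0, hg0⟩ := IsCyclic.exists_generator (α := Mt)
      obtain ⟨t, htM, htg0⟩ := Subgroup.mem_map.mp g0.2
      refine ⟨t, htM, fun c hc => ?_⟩
      obtain ⟨k, hk⟩ := hg0 ⟨f c, Subgroup.mem_map_of_mem f hc⟩
      have hk2 : f t ^ (k : ℤ) = f c := by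
        have h5 := congrArg (Subtype.val) hk
        rw [SubgroupClass.coe_zpow] at h5
        rw [htg0]
        exact h5
      refine ⟨c * (t ^ (k : ℤ))⁻¹, k, ?_, by group⟩
      apply hΦZ
      have : f (c * (t ^ (k : ℤ))⁻¹) = 1 := by
        rw [map_mul, map_inv, map_zpow, hk2]
        group
      exact (QuotientGroup.eq_one_iff _).mp this
  obtain ⟨t, htM, ht⟩ := hzdec
  rw [isComm_iff]
  intro a ha b hb
  obtain ⟨z, k, hz, rfl⟩ := ht a ha
  obtain ⟨z', k', hz', rfl⟩ := ht b hb
  have hzc := Subgroup.mem_center_iff.mp hz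
  have hz'c := Subgroup.mem_center_iff.mp hz'
  calc z * t ^ (k:ℤ) * (z' * t ^ (k':ℤ))
      = z * z' * (t ^ (k:ℤ) * t ^ (k':ℤ)) := by
        rw [mul_assoc, ← mul_assoc (t ^ (k:ℤ)), hz'c (t ^ (k:ℤ))]
        group
    _ = z' * z * (t ^ (k':ℤ) * t ^ (k:ℤ)) := by
        rw [← zpow_add, ← zpow_add, add_comm, hzc z']
    _ = z' * t ^ (k':ℤ) * (z * t ^ (k:ℤ)) := by
        rw [mul_assoc, ← mul_assoc z, ← hzc (t ^ (k':ℤ))]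
        group

universe v

lemma lemL (p : ℕ) [Fact p.Prime] :
    ∀ (n : ℕ) (G : Type v) [Group G] [Finite G], Nat.card G ≤ n → IsPGroup p G →
      (¬ ∀ a b : G, a * b = b * a) →
      (⨆ H ∈ {H : Subgroup G | IsMinNonab G H}, H) = ⊤ := by
  intro n
  induction n with
  | zero =>
    intro G _ _ hcard _ _
    have : 0 < Nat.card G := Nat.card_pos
    omega
  | succ n IH =>
    intro G _ _ hcard hG hna
    have hp := (Fact.out : p.Prime)
    by_contra hK
    set 𝒜 := {H : Subgroup G | IsMinNonab G H} with h𝒜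
    set K := ⨆ H ∈ 𝒜, H with hKdef
    have hle : ∀ A : Subgroup G, IsMinNonab G A → A ≤ K := fun A hA =>
      le_iSup₂ (f := fun (H : Subgroup G) (_ : H ∈ 𝒜) => H) A hA
    have htopnc : ¬ IsMulCommutative (⊤ : Subgroup G) := by
      intro hc; exact hna fun a b => (isComm_iff ⊤).mp hc a trivial b trivial
    have htopm : ¬ IsMinNonab G ⊤ := fun h => hK (top_le_iff.mp (hle ⊤ h))
    have hexprop : ∃ H0 : Subgroup G, H0 < ⊤ ∧ ¬ IsMulCommutative H0 := by
      by_contra hc; push_neg at hc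
      exact htopm ⟨htopnc, fun L hL => hc L hL⟩
    obtain ⟨H0, hH0t, hH0c⟩ := hexprop
    have key : ∀ H : Subgroup G, H ≠ ⊤ → ¬ IsMulCommutative H → H ≤ K := by
      intro H hHt hHc
      obtain ⟨M, hHM, hMco⟩ := exists_maximal hHt
      obtain ⟨a, haH, b, hbH, hab⟩ := (not_comm_iff H).mp hHc
      have hMna : ¬ ∀ s t : ↥M, s * t = t * s := by
        intro hc
        exact hab (congrArg Subtype.val (hc ⟨a, hHM haH⟩ ⟨b, hHM hbH⟩))
      have hcard' : Nat.card ↥M ≤ n := by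
        have h1 : Nat.card ↥M < Nat.card G := by
          have h2 := card_lt_of_lt (lt_top_iff_ne_top.mpr hMco.1)
          rwa [Subgroup.card_top] at h2
        omega
      have hMsup := IH ↥M hcard' (hG.to_subgroup M) hMna
      have hMK : M ≤ K := by
        have h2 : M = Subgroup.map M.subtype ⊤ := by
          rw [← MonoidHom.range_eq_map, Subgroup.range_subtype]
        rw [h2, ← hMsup, Subgroup.map_le_iff_le_comap]
        refine iSup₂_le ?_
        intro A hA
        rw [← Subgroup.map_le_iff_le_comap]
        exact hle _ (isMinNonab_map hA)
      exact hHM.trans hMK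
    have hKnc : ¬ IsMulCommutative K := fun hc => hH0c (comm_of_le (key H0 hH0t.ne hH0c) hc)
    have hKco : IsCoatom K := by
      obtain ⟨M, hKM, hMco⟩ := exists_maximal hK
      have hMc : ¬ IsMulCommutative M := fun hcm => hKnc (comm_of_le hKM hcm)
      have h3 : K = M := le_antisymm hKM (key M hMco.1 hMc)
      rwa [h3]
    have hcyc : ∀ y : G, Subgroup.zpowers y ≠ ⊤ := by
      intro y hc
      apply hna
      intro a b
      have haz : a ∈ Subgroup.zpowers y := by rw [hc]; trivial
      have hbz : b ∈ Subgroup.zpowers y := by rw [hc]; trivial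
      rw [Subgroup.mem_zpowers_iff] at haz hbz
      obtain ⟨i, rfl⟩ := haz
      obtain ⟨j, rfl⟩ := hbz
      exact zpow_mul_comm y i j
    obtain ⟨x1, hx1⟩ : ∃ x1 : G, x1 ∉ K := by
      by_contra hc; push_neg at hc; exact hK ((Subgroup.eq_top_iff' K).mpr hc)
    obtain ⟨M1, hM1x, hM1co⟩ := exists_maximal (hcyc x1)
    have hM1K : M1 ≠ K := fun h => hx1 (h ▸ hM1x (Subgroup.mem_zpowers x1))
    have hM1c : IsMulCommutative M1 := by
      by_contra hc
      rcases eq_or_lt_of_le (key M1 hM1co.1 hc) with heq | hlt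
      · exact hM1K heq
      · exact hK (hM1co.2 _ hlt)
    obtain ⟨x2, hx2K, hx2M1⟩ := exists_not_mem_pair hK hM1co.1
    obtain ⟨M2, hM2x, hM2co⟩ := exists_maximal (hcyc x2)
    have hM2K : M2 ≠ K := fun h => hx2K (h ▸ hM2x (Subgroup.mem_zpowers x2))
    have hM12 : M1 ≠ M2 := fun h => hx2M1 (h ▸ hM2x (Subgroup.mem_zpowers x2))
    have hM2c : IsMulCommutative M2 := by
      by_contra hc
      rcases eq_or_lt_of_le (key M2 hM2co.1 hc) with heq | hlt
      · exact hM2K heq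
      · exact hK (hM2co.2 _ hlt)
    obtain ⟨hpow, hcommc⟩ := center_facts hG hna hM1co hM2co hM12 hM1c hM2c
    have final : ∀ v w : G, v * w ≠ w * v → v ∉ K → False := by
      intro v w hvw hvK
      have hvmem : v ∈ Subgroup.closure ({v, w} : Set G) :=
        Subgroup.subset_closure (by simp)
      have hwmem : w ∈ Subgroup.closure ({v, w} : Set G) :=
        Subgroup.subset_closure (by simp)
      have hgen : Subgroup.closure ({v, w} : Set G) = ⊤ := by
        by_contra hne
        have hnc2 : ¬ IsMulCommutative (Subgroup.closure ({v, w} : Set G)) := by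
          rw [not_comm_iff]
          exact ⟨v, hvmem, w, hwmem, hvw⟩
        exact hvK (key _ hne hnc2 hvmem)
      exact hKnc (lemR hG hpow hcommc hgen hKco)
    by_cases hca : ∃ xx uu : G, xx ∉ K ∧ uu ∈ K ∧ xx * uu ≠ uu * xx
    · obtain ⟨xx, uu, h1, h2, h3⟩ := hca
      exact final xx uu h3 h1
    · push_neg at hca
      haveI hKn : K.Normal := normal_of_coatom hG hKco
      have hKidx : K.index = p := index_eq_p hG hKco
      have hcardQK : Nat.card (G ⧸ K) = p := by rw [← Subgroup.index_eq_card, hKidx]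
      have hx1c : ∀ g : G, x1 * g = g * x1 := by
        intro g
        by_cases hgK : g ∈ K
        · exact hca x1 g hx1 hgK
        · have hmk1 : ((x1 : G ⧸ K)) ≠ 1 := fun hc => hx1 ((QuotientGroup.eq_one_iff x1).mp hc)
          have hzp : Subgroup.zpowers ((x1 : G ⧸ K)) = ⊤ := by
            have hzb : Subgroup.zpowers ((x1 : G ⧸ K)) ≠ ⊥ := by
              rwa [Ne, Subgroup.zpowers_eq_bot]
            have hdvd : Nat.card (Subgroup.zpowers ((x1 : G ⧸ K))) ∣ p := by
              rw [← hcardQK]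
              exact Subgroup.card_subgroup_dvd_card _
            rcases hp.eq_one_or_self_of_dvd _ hdvd with h | h
            · exact absurd (Subgroup.eq_bot_of_card_eq _ h) hzb
            · exact Subgroup.eq_top_of_card_eq _ (by rw [h, hcardQK])
          have hgz : (g : G ⧸ K) ∈ Subgroup.zpowers ((x1 : G ⧸ K)) := by rw [hzp]; trivial
          rw [Subgroup.mem_zpowers_iff] at hgz
          obtain ⟨k, hk⟩ := hgz
          have hw : g * (x1 ^ k)⁻¹ ∈ K := by
            rw [← QuotientGroup.eq_one_iff]
            have e : ((g * (x1 ^ k)⁻¹ : G) : G ⧸ K)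
                = (g : G ⧸ K) * (((x1 : G ⧸ K)) ^ k)⁻¹ := by
              rw [QuotientGroup.mk_mul, QuotientGroup.mk_inv, QuotientGroup.mk_zpow]
            rw [e, hk]
            group
          have h6 := hca x1 _ hx1 hw
          have hgw : g = (g * (x1 ^ k)⁻¹) * x1 ^ k := by group
          rw [hgw]
          calc x1 * ((g * (x1 ^ k)⁻¹) * x1 ^ k)
              = (x1 * (g * (x1 ^ k)⁻¹)) * x1 ^ k := by group
            _ = ((g * (x1 ^ k)⁻¹) * x1) * x1 ^ k := by rw [h6]
            _ = (g * (x1 ^ k)⁻¹) * x1 ^ k * x1 := by group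
      obtain ⟨v, hvK, w, hwK, hvw⟩ := (not_comm_iff K).mp hKnc
      have hvx1 : v * x1 ∉ K := fun hc => hx1 (by simpa using K.mul_mem (K.inv_mem hvK) hc)
      have hnc3 : (v * x1) * w ≠ w * (v * x1) := by
        intro hc
        apply hvw
        have h7 : (v * w) * x1 = (w * v) * x1 := by
          calc (v * w) * x1 = v * (w * x1) := by group
            _ = v * (x1 * w) := by rw [hx1c w]
            _ = (v * x1) * w := by group
            _ = w * (v * x1) := hc
            _ = (w * v) * x1 := by group
        exact mul_right_cancel h7
      exact final (v * x1) w hnc3 hvx1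

end MNA

/-- A finite `p`-group with exactly one conjugacy class of minimal non-abelian subgroups
is itself minimal non-abelian. -/
theorem stmt6 {G : Type*} [Group G] [Finite G] (p : ℕ) (hp : p.Prime)
    (hG : IsPGroup p G) (h : kappa1 G = 1) :
    IsMinNonab G ⊤ := by
  classical
  haveI : Fact p.Prime := ⟨hp⟩
  unfold kappa1 at h
  rw [Set.ncard_eq_one] at h
  obtain ⟨O₀, hO₀⟩ := h
  have hO₀mem : O₀ ∈ {O : Set (Subgroup G) |
      ∃ H : Subgroup G, IsMinNonab G H ∧ O = MulAction.orbit (ConjAct G) H} := by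
    rw [hO₀]; exact rfl
  obtain ⟨B, hB, hOB⟩ := hO₀mem
  have horb : ∀ A : Subgroup G, IsMinNonab G A →
      A ∈ MulAction.orbit (ConjAct G) B := by
    intro A hA
    have h1 : MulAction.orbit (ConjAct G) A ∈ {O : Set (Subgroup G) |
        ∃ H : Subgroup G, IsMinNonab G H ∧ O = MulAction.orbit (ConjAct G) H} := ⟨A, hA, rfl⟩
    rw [hO₀, Set.mem_singleton_iff] at h1
    rw [← hOB, ← h1]
    exact MulAction.mem_orbit_self A
  have hna : ¬ ∀ a b : G, a * b = b * a := by
    intro hc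
    exact hB.1 ((MNA.isComm_iff B).mpr fun a _ b _ => hc a b)
  have hKtop := MNA.lemL p (Nat.card G) G le_rfl hG hna
  constructor
  · intro hc
    exact hB.1 (MNA.comm_of_le le_top hc)
  · intro L hL
    by_contra hLc
    obtain ⟨M, hLM, hMco⟩ := MNA.exists_maximal hL.ne
    haveI hMn : M.Normal := MNA.normal_of_coatom hG hMco
    obtain ⟨B', hB', hB'L⟩ := MNA.exists_minNonab_le hLc
    have hall : ∀ A : Subgroup G, IsMinNonab G A → A ≤ M := by
      intro A hA
      obtain ⟨g1, hg1⟩ := MulAction.mem_orbit_iff.mp (horb A hA)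
      obtain ⟨g2, hg2⟩ := MulAction.mem_orbit_iff.mp (horb B' hB')
      have hB2 : g2⁻¹ • B' = B := by rw [← hg2, inv_smul_smul]
      have hAeq : A = (g1 * g2⁻¹) • B' := by rw [mul_smul, hB2, hg1]
      rw [hAeq]
      calc (g1 * g2⁻¹) • B' ≤ (g1 * g2⁻¹) • M :=
            Subgroup.pointwise_smul_le_pointwise_smul_iff.mpr (hB'L.trans hLM)
        _ = M := hMn.conjAct _
    have h8 : (⨆ H ∈ {H : Subgroup G | IsMinNonab G H}, H) ≤ M := iSup₂_le hall
    rw [hKtop] at h8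
    exact hMco.1 (top_le_iff.mp h8)
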